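/- Let (W,S) be an irreducible infinite Coxeter system with standard Coxeter element c of length n (the rank). If c is straight, then the set Φ⁺(c⁻¹) of positive roots sent to negative roots by c⁻¹ has exactly n elements, and the ⟨c⟩-orbits of the roots c^k(β), β ∈ Φ⁺(c⁻¹), k ∈ ℤ, are pairwise distinct; i.e. no two distinct elements of Φ⁺(c⁻¹) lie in the same ⟨c⟩-orbit in the root system. -/

import Mathlib

open List

namespace CoxPaper

/-- Irreducibility of a Coxeter matrix: connectedness of the Coxeter diagram, the graph
on `B` with an edge between distinct `i`, `j` whenever `M i j ≠ 2`. -/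
def IsIrreducible {B : Type*} (M : CoxeterMatrix B) : Prop :=
  (SimpleGraph.fromRel (fun i j => M i j ≠ 2)).Connected

variable {B : Type*} {W : Type*} [Group W] {M : CoxeterMatrix B}

/-- The standard parabolic subgroup `W_I` generated by the simple reflections indexed by `I`. -/
def stdParabolic (cs : CoxeterSystem M W) (I : Set B) : Subgroup W :=
  Subgroup.closure (cs.simple '' I)

/-- A parabolic subgroup: a conjugate of a standard parabolic subgroup. -/
def IsParabolic (cs : CoxeterSystem M W) (P : Subgroup W) : Prop :=
  ∃ (w : W) (I : Set B), P = (stdParabolic cs I).map (MulAut.conj w).toMonoidHom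

/-- An element is essential if it lies in no proper parabolic subgroup. -/
def IsEssential (cs : CoxeterSystem M W) (w : W) : Prop :=
  ∀ P : Subgroup W, IsParabolic cs P → P ≠ ⊤ → w ∉ P

/-- A standard Coxeter element: the product of all the simple reflections, each occurring
exactly once, in some order. -/
def IsStdCoxeterElement (cs : CoxeterSystem M W) (w : W) : Prop :=
  ∃ l : List B, l.Nodup ∧ (∀ i : B, i ∈ l) ∧ w = cs.wordProd l

/-- A Coxeter element: any conjugate of a standard Coxeter element. -/
def IsCoxeterElement (cs : CoxeterSystem M W) (w : W) : Prop :=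
  ∃ (x c : W), IsStdCoxeterElement cs c ∧ w = x * c * x⁻¹

/-- Length of a shortest factorization of `w` as a product of elements of `Ts`. -/
noncomputable def reflLengthOn (Ts : Set W) (w : W) : ℕ :=
  sInf {k | ∃ l : List W, l.length = k ∧ (∀ t ∈ l, t ∈ Ts) ∧ l.prod = w}

/-- The reflection length `ℓ_T(w)`. -/
noncomputable def reflLength (cs : CoxeterSystem M W) (w : W) : ℕ :=
  reflLengthOn {t | cs.IsReflection t} w

/-- A reduced reflection factorization of `w`. -/
def IsReducedReflFactorization (cs : CoxeterSystem M W) (w : W) (l : List W) : Prop :=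
  (∀ t ∈ l, cs.IsReflection t) ∧ l.prod = w ∧ l.length = reflLength cs w

/-- The parabolic closure of a subset `X` of `W`: the intersection of all parabolic
subgroups containing `X` (which is the smallest such parabolic subgroup). -/
noncomputable def parabolicClosure (cs : CoxeterSystem M W) (X : Set W) : Subgroup W :=
  sInf {P | IsParabolic cs P ∧ X ⊆ ↑P}

/-- An element `w` is straight if `ℓ(wᵐ) = |m| ℓ(w)` for all integers `m`. -/
def IsStraight (cs : CoxeterSystem M W) (w : W) : Prop :=
  ∀ m : ℤ, cs.length (w ^ m) = m.natAbs * cs.length w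

/-- The standard geometric (Tits) representation of a Coxeter system on a real vector
space `V` with basis `(e_i)` and symmetric bilinear form `B(e_i, e_j) = -cos (π / m_{ij})`
(interpreted as `-1` when `m_{ij} = ∞`, i.e. `M i j = 0`). -/
structure GeomRep (cs : CoxeterSystem M W) (V : Type*) [AddCommGroup V] [Module ℝ V] where
  /-- the simple roots, a basis of `V` -/
  e : Module.Basis B ℝ V
  /-- the bilinear form -/
  BF : V →ₗ[ℝ] V →ₗ[ℝ] ℝ
  /-- the action of `W` on `V` -/
  σ : W →* (V →ₗ[ℝ] V)
  hBF : ∀ i j, BF (e i) (e j) = if M i j = 0 then -1 else -Real.cos (Real.pi / (M i j : ℝ))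
  hσ : ∀ i v, σ (cs.simple i) v = v - (2 * BF (e i) v) • e i

namespace GeomRep

variable {V : Type*} [AddCommGroup V] [Module ℝ V] {cs : CoxeterSystem M W}

/-- Roots. -/
def IsRoot (ρ : GeomRep cs V) (α : V) : Prop := ∃ (w : W) (i : B), α = ρ.σ w (ρ.e i)

/-- Positive roots. -/
def IsPos (ρ : GeomRep cs V) (α : V) : Prop := ρ.IsRoot α ∧ ∀ i, 0 ≤ ρ.e.repr α i

/-- Negative roots. -/
def IsNeg (ρ : GeomRep cs V) (α : V) : Prop := ρ.IsRoot α ∧ ∀ i, ρ.e.repr α i ≤ 0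

/-- The inversion set `Φ⁺(u)`: positive roots sent by `u` to negative roots. -/
def invSet (ρ : GeomRep cs V) (u : W) : Set V := {α | ρ.IsPos α ∧ ρ.IsNeg (ρ.σ u α)}

end GeomRep

end CoxPaper

namespace CoxPaperAux

open CoxPaper CoxPaper.GeomRep CoxeterSystem Real

variable {B : Type*} {W : Type*} [Group W] {M : CoxeterMatrix B}
variable {cs : CoxeterSystem M W}
variable {V : Type*} [AddCommGroup V] [Module ℝ V] (ρ : GeomRep cs V)

local prefix:100 "s" => cs.simple
local prefix:100 "π" => cs.wordProd
local prefix:100 "ℓ" => cs.length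

lemma BF_diag (i : B) : ρ.BF (ρ.e i) (ρ.e i) = 1 := by
  rw [ρ.hBF i i, M.diagonal i]
  norm_num [Real.cos_pi]

lemma BF_comm_basis (i j : B) : ρ.BF (ρ.e i) (ρ.e j) = ρ.BF (ρ.e j) (ρ.e i) := by
  rw [ρ.hBF, ρ.hBF, M.symmetric i j]

lemma BF_comm (x y : V) : ρ.BF x y = ρ.BF y x := by
  have : ρ.BF = ρ.BF.flip := by
    apply ρ.e.ext
    intro i
    apply ρ.e.ext
    intro j
    simpa using BF_comm_basis ρ i j
  conv_lhs => rw [this]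
  rfl

lemma sigma_mul_apply (u w : W) (v : V) : ρ.σ (u * w) v = ρ.σ u (ρ.σ w v) := by
  rw [map_mul]; rfl

@[simp] lemma sigma_one_apply (v : V) : ρ.σ 1 v = v := by rw [map_one]; rfl

lemma sigma_inv_cancel (w : W) (v : V) : ρ.σ w⁻¹ (ρ.σ w v) = v := by
  rw [← sigma_mul_apply, inv_mul_cancel, sigma_one_apply]

lemma sigma_cancel_inv (w : W) (v : V) : ρ.σ w (ρ.σ w⁻¹ v) = v := by
  rw [← sigma_mul_apply, mul_inv_cancel, sigma_one_apply]

lemma sigma_injective (w : W) : Function.Injective (ρ.σ w) := by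
  intro x y h
  have := congrArg (ρ.σ w⁻¹) h
  rwa [sigma_inv_cancel, sigma_inv_cancel] at this

lemma sigma_simple_self (i : B) : ρ.σ (s i) (ρ.e i) = - ρ.e i := by
  rw [ρ.hσ, BF_diag]
  module

lemma BF_sigma_simple (i : B) (x y : V) :
    ρ.BF (ρ.σ (s i) x) (ρ.σ (s i) y) = ρ.BF x y := by
  rw [ρ.hσ, ρ.hσ]
  simp only [map_sub, map_smul, LinearMap.sub_apply, LinearMap.smul_apply, smul_eq_mul]
  rw [BF_diag, BF_comm ρ x (ρ.e i)]
  ring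

lemma BF_sigma (w : W) (x y : V) : ρ.BF (ρ.σ w x) (ρ.σ w y) = ρ.BF x y := by
  induction w using CoxeterSystem.simple_induction_left cs generalizing x y with
  | one => simp
  | mul_simple_left w i ih =>
      rw [sigma_mul_apply, sigma_mul_apply, BF_sigma_simple, ih]

/-! ### Roots -/

lemma isRoot_simple (i : B) : ρ.IsRoot (ρ.e i) := ⟨1, i, by simp⟩

lemma isRoot_sigma {α : V} (w : W) (h : ρ.IsRoot α) : ρ.IsRoot (ρ.σ w α) := by
  obtain ⟨u, i, rfl⟩ := h
  exact ⟨w * u, i, by rw [sigma_mul_apply]⟩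

lemma isRoot_neg {α : V} (h : ρ.IsRoot α) : ρ.IsRoot (-α) := by
  obtain ⟨u, i, rfl⟩ := h
  refine ⟨u * s i, i, ?_⟩
  rw [sigma_mul_apply, sigma_simple_self, map_neg]

lemma root_ne_zero {α : V} (h : ρ.IsRoot α) : α ≠ 0 := by
  obtain ⟨u, i, rfl⟩ := h
  intro h0
  have := congrArg (ρ.σ u⁻¹) h0
  rw [sigma_inv_cancel, map_zero] at this
  exact ρ.e.ne_zero i this

lemma BF_root {α : V} (h : ρ.IsRoot α) : ρ.BF α α = 1 := by
  obtain ⟨u, i, rfl⟩ := h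
  rw [BF_sigma, BF_diag]

lemma eq_zero_of_pos_of_neg {α : V} (h1 : ρ.IsPos α) (h2 : ρ.IsNeg α) : α = 0 := by
  have : ρ.e.repr α = 0 := by
    ext i
    exact le_antisymm (h2.2 i) (h1.2 i)
  have := congrArg ρ.e.repr.symm this
  simpa using this

lemma isNeg_neg {α : V} (h : ρ.IsPos α) : ρ.IsNeg (-α) :=
  ⟨isRoot_neg ρ h.1, fun i => by simpa using h.2 i⟩

lemma isPos_neg {α : V} (h : ρ.IsNeg α) : ρ.IsPos (-α) :=
  ⟨isRoot_neg ρ h.1, fun i => by simpa using h.2 i⟩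

lemma not_isNeg_of_isPos {α : V} (hr : α ≠ 0) (h : ρ.IsPos α) : ¬ ρ.IsNeg α :=
  fun h2 => hr (eq_zero_of_pos_of_neg ρ h h2)

end CoxPaperAux

namespace CoxPaperAux

open CoxPaper CoxPaper.GeomRep CoxeterSystem Real

variable {B : Type*} {W : Type*} [Group W] {M : CoxeterMatrix B}
variable {cs : CoxeterSystem M W}
variable {V : Type*} [AddCommGroup V] [Module ℝ V] (ρ : GeomRep cs V)

local prefix:100 "s" => cs.simple
local prefix:100 "π" => cs.wordProd
local prefix:100 "ℓ" => cs.length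

lemma repr_sigma_simple_ne {i j : B} (hji : j ≠ i) (v : V) :
    ρ.e.repr (ρ.σ (s i) v) j = ρ.e.repr v j := by
  rw [ρ.hσ]
  simp [Finsupp.single_apply, Ne.symm hji]

lemma repr_sigma_word_ne {i : B} : ∀ (L : List B), i ∉ L → ∀ v : V,
    ρ.e.repr (ρ.σ (π L) v) i = ρ.e.repr v i := by
  intro L
  induction L with
  | nil => simp
  | cons x L ih =>
      intro hmem v
      have hix : i ≠ x := fun h => hmem (by rw [h]; exact List.mem_cons_self)
      rw [cs.wordProd_cons, sigma_mul_apply, repr_sigma_simple_ne ρ hix,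
        ih (fun h => hmem (List.mem_cons_of_mem x h))]

/-! ### Chebyshev-like sequence -/

noncomputable def chebU (c : ℝ) : ℕ → ℝ
  | 0 => 0
  | 1 => 1
  | (k+2) => 2*c*chebU c (k+1) - chebU c k

@[simp] lemma chebU_zero (c : ℝ) : chebU c 0 = 0 := rfl
@[simp] lemma chebU_one' (c : ℝ) : chebU c 1 = 1 := rfl
lemma chebU_succ_succ (c : ℝ) (k : ℕ) :
    chebU c (k+2) = 2*c*chebU c (k+1) - chebU c k := rfl

lemma chebU_one : ∀ k : ℕ, chebU (1:ℝ) k = k ∧ chebU (1:ℝ) (k+1) = k+1 := by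
  intro k
  induction k with
  | zero => simp
  | succ k ih =>
      constructor
      · push_cast
        exact_mod_cast ih.2
      · rw [chebU_succ_succ, ih.1, ih.2]
        push_cast
        ring

lemma chebU_sin (θ : ℝ) : ∀ k : ℕ, chebU (Real.cos θ) k * Real.sin θ = Real.sin (k * θ) := by
  have key : ∀ k : ℕ, chebU (Real.cos θ) k * Real.sin θ = Real.sin (k * θ) ∧
      chebU (Real.cos θ) (k+1) * Real.sin θ = Real.sin ((k+1) * θ) := by
    intro k
    induction k with
    | zero => simp
    | succ k ih =>
        constructor
        · push_cast
          exact_mod_cast ih.2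
        · rw [chebU_succ_succ, sub_mul, mul_assoc, mul_assoc, ih.2, ih.1]
          push_cast
          have h1 : ((k:ℝ) + 1 + 1) * θ = ((k:ℝ)+1)*θ + θ := by ring
          rw [h1, Real.sin_add]
          have h2 : ((k:ℝ)) * θ = ((k:ℝ)+1)*θ - θ := by ring
          rw [h2, Real.sin_sub]
          ring
  exact fun k => (key k).1

/-- The real number `cos (π / m)`, with the convention that it is `1` when `m = 0`. -/
noncomputable def cosm (m : ℕ) : ℝ := if m = 0 then 1 else Real.cos (Real.pi / m)

lemma chebU_cosm_nonneg {m : ℕ} (hm : m ≠ 1) {k : ℕ} (hk : m = 0 ∨ k ≤ m) :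
    0 ≤ chebU (cosm m) k := by
  rcases Nat.eq_zero_or_pos m with h0 | hpos
  · rw [cosm, if_pos h0, (chebU_one k).1]
    positivity
  · have h2 : 2 ≤ m := by omega
    have hk' : k ≤ m := by
      rcases hk with h | h
      · omega
      · exact h
    have hm2 : (2:ℝ) ≤ (m:ℝ) := by exact_mod_cast h2
    have hkR : (k:ℝ) ≤ (m:ℝ) := by exact_mod_cast hk'
    have hmpos : (0:ℝ) < (m:ℝ) := by positivity
    have hθpos : 0 < Real.pi / m := by positivity
    have hθle : Real.pi / m < Real.pi := by
      rw [div_lt_iff₀ hmpos]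
      nlinarith [Real.pi_pos]
    have hsin : 0 < Real.sin (Real.pi / m) := Real.sin_pos_of_pos_of_lt_pi hθpos hθle
    rw [cosm, if_neg (by omega)]
    have hcs := chebU_sin (Real.pi / m) k
    have hks : 0 ≤ Real.sin (k * (Real.pi / m)) := by
      apply Real.sin_nonneg_of_nonneg_of_le_pi
      · positivity
      · rw [mul_div_assoc', div_le_iff₀ hmpos]
        nlinarith [Real.pi_nonneg]
    nlinarith [hsin, hcs]

/-! ### The action on a simple root of an element of a dihedral subgroup -/

@[simp] lemma alternatingWord_zero (i j : B) : alternatingWord i j 0 = [] := rfl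

lemma sigma_alt (i j : B) (c : ℝ) (hBij : ρ.BF (ρ.e i) (ρ.e j) = -c)
    (hBji : ρ.BF (ρ.e j) (ρ.e i) = -c) : ∀ m : ℕ,
    ρ.σ (π (alternatingWord i j m)) (ρ.e i) =
      (if Even m then chebU c (m+1) else chebU c m) • ρ.e i +
      (if Even m then chebU c m else chebU c (m+1)) • ρ.e j := by
  intro m
  induction m with
  | zero => simp
  | succ m ih =>
      rw [alternatingWord_succ', cs.wordProd_cons, sigma_mul_apply, ih]
      rcases Nat.even_or_odd m with hev | hod
      · have hnev : ¬ Even (m+1) := by simp [Nat.even_add_one, hev]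
        rw [if_pos hev, if_pos hev, if_pos hev, if_neg hnev, if_neg hnev]
        rw [ρ.hσ]
        simp only [map_add, map_smul, smul_eq_mul, hBji, BF_diag]
        rw [chebU_succ_succ]
        module
      · have hnev : ¬ Even m := Nat.not_even_iff_odd.mpr hod
        have hev1 : Even (m+1) := Nat.even_add_one.mpr hnev
        rw [if_neg hnev, if_neg hnev, if_neg hnev, if_pos hev1, if_pos hev1]
        rw [ρ.hσ]
        simp only [map_add, map_smul, smul_eq_mul, hBij, BF_diag]
        rw [chebU_succ_succ]
        module

/-! ### Every word in two letters has an alternating normal form -/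

lemma alt_step (i j x : B) (m : ℕ) (hx : x = i ∨ x = j) :
    ∃ m', m' ≤ m + 1 ∧ (s x * π (alternatingWord i j m) = π (alternatingWord i j m') ∨
      s x * π (alternatingWord i j m) = π (alternatingWord j i m')) := by
  by_cases hxe : x = (if Even m then j else i)
  · refine ⟨m + 1, le_refl _, Or.inl ?_⟩
    rw [alternatingWord_succ', cs.wordProd_cons, hxe]
  · -- strip
    match m with
    | 0 =>
        simp only [if_pos (Even.zero)] at hxe
        have hxi : x = i := by tauto
        refine ⟨1, by omega, Or.inr ?_⟩
        subst hxi
        simp [alternatingWord]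
    | (m'+1) =>
        have hx' : x = (if Even m' then j else i) := by
          rcases Nat.even_or_odd m' with h | h
          · simp only [if_pos h]
            have : ¬ Even (m'+1) := by simp [Nat.even_add_one, h]
            simp only [if_neg this] at hxe
            tauto
          · have h' : ¬ Even m' := Nat.not_even_iff_odd.mpr h
            simp only [if_neg h']
            have : Even (m'+1) := Nat.even_add_one.mpr h'
            simp only [if_pos this] at hxe
            tauto
        refine ⟨m', by omega, Or.inl ?_⟩
        rw [alternatingWord_succ', cs.wordProd_cons, ← hx', cs.simple_mul_simple_cancel_left]

lemma exists_alt (i j : B) : ∀ (K : List B), (∀ x ∈ K, x = i ∨ x = j) →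
    ∃ m, m ≤ K.length ∧ (π K = π (alternatingWord i j m) ∨
      π K = π (alternatingWord j i m)) := by
  intro K
  induction K with
  | nil =>
      exact fun _ => ⟨0, by simp, Or.inl (by simp [alternatingWord])⟩
  | cons x K ih =>
      intro hK
      obtain ⟨m, hm, hc⟩ := ih (fun y hy => hK y (List.mem_cons_of_mem x hy))
      have hx := hK x (List.mem_cons_self)
      rw [cs.wordProd_cons]
      rcases hc with h | h
      · obtain ⟨m', hm', hc'⟩ := alt_step (cs := cs) i j x m hx
        rw [h]
        exact ⟨m', by simp; omega, hc'⟩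
      · obtain ⟨m', hm', hc'⟩ := alt_step (cs := cs) j i x m (hx.symm)
        rw [h]
        exact ⟨m', by simp; omega, hc'.symm⟩

end CoxPaperAux

namespace CoxPaperAux

open CoxPaper CoxPaper.GeomRep CoxeterSystem Real

variable {B : Type*} {W : Type*} [Group W] {M : CoxeterMatrix B}
variable {cs : CoxeterSystem M W}
variable {V : Type*} [AddCommGroup V] [Module ℝ V] (ρ : GeomRep cs V)

local prefix:100 "s" => cs.simple
local prefix:100 "π" => cs.wordProd
local prefix:100 "ℓ" => cs.length

lemma isPos_simple (i : B) : ρ.IsPos (ρ.e i) := by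
  refine ⟨isRoot_simple ρ i, fun k => ?_⟩
  rw [Module.Basis.repr_self]
  rcases eq_or_ne i k with rfl | h
  · simp
  · rw [Finsupp.single_eq_of_ne h.symm]

lemma BF_simple_pair (i j : B) : ρ.BF (ρ.e i) (ρ.e j) = - cosm (M.M i j) := by
  rw [ρ.hBF, cosm]
  split_ifs <;> norm_num

/-- The key positivity lemma of Tits' theory: if `ℓ(w sᵢ) > ℓ(w)` then `w` maps the
simple root `αᵢ` to a positive root. -/
lemma key_lemma : ∀ n : ℕ, ∀ w : W, ∀ i : B, ℓ w = n → ℓ (w * s i) = n + 1 →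
    ρ.IsPos (ρ.σ w (ρ.e i)) := by
  intro n
  induction n using Nat.strong_induction_on with
  | _ n IH =>
  intro w i hlw hlws
  rcases eq_or_ne w 1 with rfl | hw1
  · simpa using isPos_simple ρ i
  obtain ⟨j, hj⟩ := cs.exists_rightDescent_of_ne_one hw1
  rw [cs.isRightDescent_iff] at hj
  have hij : j ≠ i := by
    rintro rfl
    omega
  -- The set of lengths of left parts of factorizations w = v · (word in i, j)
  set A : Set ℕ := {k | ∃ v : W, ∃ L : List B, (∀ x ∈ L, x = i ∨ x = j) ∧
    w = v * π L ∧ ℓ v = k ∧ ℓ w = k + L.length} with hA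
  have hAne : ℓ (w * s j) ∈ A := by
    refine ⟨w * s j, [j], by simp, ?_, rfl, ?_⟩
    · rw [cs.wordProd_singleton, cs.simple_mul_simple_cancel_right]
    · simp only [List.length_singleton]
      omega
  obtain ⟨v, L, hLok, hwv, hlv, hsum⟩ : sInf A ∈ A := Nat.sInf_mem ⟨_, hAne⟩
  have hclaim : ∀ x : B, (x = i ∨ x = j) → ℓ (v * s x) = ℓ v + 1 := by
    intro x hx
    rcases cs.length_mul_simple v x with h | h
    · exact h
    · exfalso
      have hmem : ℓ (v * s x) ∈ A := by
        refine ⟨v * s x, x :: L, ?_, ?_, rfl, ?_⟩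
        · intro y hy
          rcases List.mem_cons.mp hy with rfl | hy'
          · exact hx
          · exact hLok y hy'
        · rw [cs.wordProd_cons, ← mul_assoc, cs.simple_mul_simple_cancel_right, hwv]
        · have h1 : ℓ w ≤ ℓ (v * s x) + (x :: L).length := by
            calc ℓ w = ℓ ((v * s x) * π (x :: L)) := by
                  rw [cs.wordProd_cons, ← mul_assoc, cs.simple_mul_simple_cancel_right, hwv]
              _ ≤ ℓ (v * s x) + ℓ (π (x :: L)) := cs.length_mul_le _ _
              _ ≤ ℓ (v * s x) + (x :: L).length := by
                  have := cs.length_wordProd_le (x :: L)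
                  omega
          simp only [List.length_cons] at h1 ⊢
          omega
      have := Nat.sInf_le hmem
      omega
  have hLne : L ≠ [] := by
    rintro rfl
    simp only [cs.wordProd_nil, mul_one] at hwv
    subst hwv
    have := hclaim j (Or.inr rfl)
    omega
  have hlvlt : ℓ v < n := by
    have : 0 < L.length := List.length_pos_iff.mpr hLne
    omega
  have hpi : ρ.IsPos (ρ.σ v (ρ.e i)) :=
    IH (ℓ v) hlvlt v i rfl (hclaim i (Or.inl rfl))
  have hpj : ρ.IsPos (ρ.σ v (ρ.e j)) :=
    IH (ℓ v) hlvlt v j rfl (hclaim j (Or.inr rfl))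
  -- the dihedral part
  have hlui : L.length + 1 ≤ ℓ (π L * s i) := by
    have h1 : ℓ (w * s i) ≤ ℓ v + ℓ (π L * s i) := by
      rw [hwv, mul_assoc]
      exact cs.length_mul_le _ _
    omega
  obtain ⟨m, hmle, hform⟩ := exists_alt (cs := cs) i j L hLok
  have hfi : π L = π (alternatingWord i j m) := by
    rcases hform with h | h
    · exact h
    · match m, hmle, h with
      | 0, _, h => simpa using h
      | (m'+1), hmle, h =>
          exfalso
          rw [alternatingWord_succ, cs.wordProd_concat] at h
          have : π L * s i = π (alternatingWord i j m') := by
            rw [h, cs.simple_mul_simple_cancel_right]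
          have h2 := cs.length_wordProd_le (alternatingWord i j m')
          rw [length_alternatingWord] at h2
          rw [this] at hlui
          omega
  have hcap : M.M i j = 0 ∨ m + 1 ≤ M.M i j := by
    by_contra hcon
    push_neg at hcon
    obtain ⟨hne0, hgt⟩ := hcon
    have hform2 : π L * s i = π (alternatingWord j i (m+1)) := by
      rw [alternatingWord_succ, cs.wordProd_concat, hfi]
    have hnr := cs.not_isReduced_alternatingWord j i (m := m+1)
      (by rw [M.symmetric j i]; exact hne0) (by rw [M.symmetric j i]; omega)
    rw [CoxeterSystem.IsReduced] at hnr
    have h2 := cs.length_wordProd_le (alternatingWord j i (m+1))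
    rw [length_alternatingWord] at h2 hnr
    rw [hform2] at hlui
    omega
  have hm1 : M.M i j ≠ 1 := M.off_diagonal i j (Ne.symm hij)
  have hBij : ρ.BF (ρ.e i) (ρ.e j) = - cosm (M.M i j) := BF_simple_pair ρ i j
  have hBji : ρ.BF (ρ.e j) (ρ.e i) = - cosm (M.M i j) := by
    rw [BF_comm_basis]
    exact BF_simple_pair ρ i j
  have hualt := sigma_alt ρ i j (cosm (M.M i j)) hBij hBji m
  set a : ℝ := if Even m then chebU (cosm (M.M i j)) (m+1) else chebU (cosm (M.M i j)) m
    with ha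
  set b : ℝ := if Even m then chebU (cosm (M.M i j)) m else chebU (cosm (M.M i j)) (m+1)
    with hb
  have hanneg : 0 ≤ a := by
    rw [ha]
    split_ifs
    · exact chebU_cosm_nonneg (k := m+1) hm1 (by omega)
    · exact chebU_cosm_nonneg (k := m) hm1 (by omega)
  have hbnneg : 0 ≤ b := by
    rw [hb]
    split_ifs
    · exact chebU_cosm_nonneg (k := m) hm1 (by omega)
    · exact chebU_cosm_nonneg (k := m+1) hm1 (by omega)
  have hrw : ρ.σ w (ρ.e i) = a • ρ.σ v (ρ.e i) + b • ρ.σ v (ρ.e j) := by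
    rw [hwv, sigma_mul_apply, hfi, hualt, map_add, map_smul, map_smul]
  refine ⟨⟨w, i, rfl⟩, fun k => ?_⟩
  rw [hrw]
  simp only [map_add, map_smul, Finsupp.coe_add, Finsupp.coe_smul, Pi.add_apply,
    Pi.smul_apply, smul_eq_mul]
  have := hpi.2 k
  have := hpj.2 k
  positivity

lemma isPos_of_length_succ {w : W} {i : B} (h : ℓ (w * s i) = ℓ w + 1) :
    ρ.IsPos (ρ.σ w (ρ.e i)) :=
  key_lemma ρ (ℓ w) w i rfl h

lemma sigma_mul_simple (w : W) (i : B) : ρ.σ (w * s i) (ρ.e i) = - ρ.σ w (ρ.e i) := by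
  rw [sigma_mul_apply, sigma_simple_self, map_neg]

lemma isNeg_of_length_pred {w : W} {i : B} (h : ℓ (w * s i) + 1 = ℓ w) :
    ρ.IsNeg (ρ.σ w (ρ.e i)) := by
  have h2 : ℓ ((w * s i) * s i) = ℓ (w * s i) + 1 := by
    rw [cs.simple_mul_simple_cancel_right]
    omega
  have hpos := isPos_of_length_succ ρ h2
  rw [sigma_mul_simple] at hpos
  have := isNeg_neg ρ hpos
  rwa [neg_neg] at this

lemma isPos_or_isNeg_of_isRoot {α : V} (h : ρ.IsRoot α) : ρ.IsPos α ∨ ρ.IsNeg α := by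
  obtain ⟨w, i, rfl⟩ := h
  rcases cs.length_mul_simple w i with h | h
  · exact Or.inl (isPos_of_length_succ ρ h)
  · exact Or.inr (isNeg_of_length_pred ρ h)

lemma isPos_iff_length_succ {w : W} {i : B} :
    ρ.IsPos (ρ.σ w (ρ.e i)) ↔ ℓ (w * s i) = ℓ w + 1 := by
  constructor
  · intro hp
    rcases cs.length_mul_simple w i with h | h
    · exact h
    · exfalso
      have hneg := isNeg_of_length_pred ρ h
      have h0 := eq_zero_of_pos_of_neg ρ hp hneg
      exact root_ne_zero ρ hp.1 h0
  · exact isPos_of_length_succ ρ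

lemma eq_simple_of_pos_of_simple_neg {β : V} {i : B} (hp : ρ.IsPos β)
    (hn : ρ.IsNeg (ρ.σ (s i) β)) : β = ρ.e i := by
  have hco : ∀ j, j ≠ i → ρ.e.repr β j = 0 := by
    intro j hj
    refine le_antisymm ?_ (hp.2 j)
    rw [← repr_sigma_simple_ne ρ hj]
    exact hn.2 j
  have hrepr : ρ.e.repr β = Finsupp.single i (ρ.e.repr β i) := by
    ext j
    rcases eq_or_ne j i with rfl | hj
    · rw [Finsupp.single_eq_same]
    · rw [Finsupp.single_eq_of_ne hj, hco j hj]
  have hβ : β = (ρ.e.repr β i) • ρ.e i := by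
    have h1 := congrArg ρ.e.repr.symm hrepr
    rw [LinearEquiv.symm_apply_apply, Module.Basis.repr_symm_single] at h1
    exact h1
  set μ := ρ.e.repr β i with hμ
  have hμnn : 0 ≤ μ := hp.2 i
  have hBF : ρ.BF β β = 1 := BF_root ρ hp.1
  rw [hβ] at hBF
  simp only [map_smul, LinearMap.smul_apply, smul_eq_mul, BF_diag] at hBF
  have hμ1 : μ = 1 := by nlinarith
  rw [hβ, hμ1, one_smul]

end CoxPaperAux

namespace CoxPaperAux

open CoxPaper CoxPaper.GeomRep CoxeterSystem Real

variable {B : Type*} {W : Type*} [Group W] {M : CoxeterMatrix B}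
variable {cs : CoxeterSystem M W}
variable {V : Type*} [AddCommGroup V] [Module ℝ V] (ρ : GeomRep cs V)

local prefix:100 "s" => cs.simple
local prefix:100 "π" => cs.wordProd
local prefix:100 "ℓ" => cs.length

include ρ in
lemma isReduced_of_nodup : ∀ {L : List B}, L.Nodup → cs.IsReduced L := by
  intro L
  induction L using List.reverseRecOn with
  | nil => intro _; simp [CoxeterSystem.IsReduced]
  | append_singleton A i ih =>
      intro h
      rw [List.nodup_append] at h
      obtain ⟨hA, -, hdisj⟩ := h
      have hiA : i ∉ A := fun hiA => hdisj i hiA i (List.mem_singleton_self i) rfl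
      have hred : cs.IsReduced A := ih hA
      have hcoord : ρ.e.repr (ρ.σ (π A) (ρ.e i)) i = 1 := by
        rw [repr_sigma_word_ne ρ A hiA, Module.Basis.repr_self, Finsupp.single_eq_same]
      have hlen : ℓ (π A * s i) = ℓ (π A) + 1 := by
        rcases cs.length_mul_simple (π A) i with h | h
        · exact h
        · exfalso
          have hneg := isNeg_of_length_pred ρ h
          have := hneg.2 i
          rw [hcoord] at this
          linarith
      rw [CoxeterSystem.IsReduced, cs.wordProd_append, cs.wordProd_singleton,
        List.length_append, List.length_singleton, hlen, hred]

/-- The sequence of positive roots associated to a word. -/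
noncomputable def invRootsF (L : List B) : Fin L.length → V :=
  fun k => ρ.σ (π (L.take k)) (ρ.e (L.get k))

lemma wordProd_take_succ (L : List B) (k : Fin L.length) :
    π (L.take ((k:ℕ)+1)) = π (L.take k) * s (L.get k) := by
  rw [← List.take_concat_get k.2, List.concat_eq_append, cs.wordProd_append,
    cs.wordProd_singleton]
  rfl

lemma length_wordProd_take {L : List B} (hL : cs.IsReduced L) {k : ℕ} (hk : k ≤ L.length) :
    ℓ (π (L.take k)) = k := by
  have h := hL.take k
  rw [CoxeterSystem.IsReduced] at h
  rw [h, List.length_take]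
  omega

lemma invRootsF_isPos {L : List B} (hL : cs.IsReduced L) (k : Fin L.length) :
    ρ.IsPos (invRootsF ρ L k) := by
  apply isPos_of_length_succ
  rw [← wordProd_take_succ, length_wordProd_take hL (by omega),
    length_wordProd_take hL (by omega : (k:ℕ) ≤ L.length)]

lemma invRootsF_mem_invSet {L : List B} (hL : cs.IsReduced L) (k : Fin L.length) :
    invRootsF ρ L k ∈ ρ.invSet (π L)⁻¹ := by
  refine ⟨invRootsF_isPos ρ hL k, ?_⟩
  set a := L.get k with ha
  have hsplit : π L = π (L.take k) * π (L.drop k) := by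
    rw [← cs.wordProd_append, List.take_append_drop]
  have hdrop : L.drop (k : ℕ) = a :: L.drop ((k:ℕ)+1) := by
    rw [ha, List.get_eq_getElem]
    exact List.drop_eq_getElem_cons k.2
  have hgrp : (π L)⁻¹ * π (L.take k) = (π (L.drop ((k:ℕ)+1)))⁻¹ * s a := by
    rw [hsplit, mul_inv_rev, inv_mul_cancel_right, hdrop, cs.wordProd_cons, mul_inv_rev,
      cs.inv_simple]
  have hval : ρ.σ (π L)⁻¹ (invRootsF ρ L k) =
      - ρ.σ (π (List.reverse (L.drop ((k:ℕ)+1)))) (ρ.e a) := by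
    rw [invRootsF, ← sigma_mul_apply, hgrp, sigma_mul_apply, ← ha, sigma_simple_self,
      map_neg, cs.wordProd_reverse]
  rw [hval]
  apply isNeg_neg
  apply isPos_of_length_succ
  have hR : List.reverse (L.drop (k:ℕ)) =
      List.reverse (L.drop ((k:ℕ)+1)) ++ [a] := by
    rw [hdrop, List.reverse_cons]
  have hred1 : cs.IsReduced (List.reverse (L.drop (k:ℕ))) :=
    (cs.isReduced_reverse_iff _).mpr (hL.drop _)
  have hred2 : cs.IsReduced (List.reverse (L.drop ((k:ℕ)+1))) :=
    (cs.isReduced_reverse_iff _).mpr (hL.drop _)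
  rw [CoxeterSystem.IsReduced] at hred1 hred2
  have hl1 : π (List.reverse (L.drop ((k:ℕ)+1))) * s a = π (List.reverse (L.drop (k:ℕ))) := by
    rw [hR, cs.wordProd_append, cs.wordProd_singleton]
  rw [hl1, hred1, hred2]
  simp only [List.length_reverse, List.length_drop]
  have := k.2
  omega

lemma invRootsF_injective {L : List B} (hL : cs.IsReduced L) :
    Function.Injective (invRootsF ρ L) := by
  have core : ∀ k k' : Fin L.length, (k:ℕ) < (k':ℕ) →
      invRootsF ρ L k ≠ invRootsF ρ L k' := by
    intro k k' hlt heq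
    simp only [invRootsF] at heq
    set a := L.get k with ha
    set b := L.get k' with hb
    set x := π (L.take (k:ℕ)) with hx
    set x' := π (L.take (k':ℕ)) with hx'
    set D := (L.take (k':ℕ)).drop ((k:ℕ)+1) with hD
    have hk'len : (k':ℕ) ≤ L.length := le_of_lt k'.2
    have hlentake : (L.take (k':ℕ)).length = (k':ℕ) := by
      rw [List.length_take]
      omega
    have hkin : (k:ℕ) < (L.take (k':ℕ)).length := by omega
    have hdropk : (L.take (k':ℕ)).drop (k:ℕ) = a :: D := by
      rw [List.drop_eq_getElem_cons hkin, hD]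
      congr 1
      rw [ha, List.get_eq_getElem]
      simp
    have h2 : x * π ((L.take (k':ℕ)).drop (k:ℕ)) = x' := by
      rw [hx, hx', ← cs.wordProd_append]
      congr 1
      have htt : (L.take (k':ℕ)).take (k:ℕ) = L.take (k:ℕ) := by
        rw [List.take_take, min_eq_left (by omega)]
      rw [← htt, List.take_append_drop]
    have h3 : x⁻¹ * x' = s a * π D := by
      rw [← h2, hdropk, cs.wordProd_cons, inv_mul_cancel_left]
    have hgrp : π D = s a * (x⁻¹ * x') := by
      rw [h3, cs.simple_mul_simple_cancel_left]
    have hkey : ρ.σ (π D) (ρ.e b) = - ρ.e a := by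
      rw [hgrp, sigma_mul_apply, sigma_mul_apply, ← heq, sigma_inv_cancel,
        sigma_simple_self]
    have hnegD : ρ.IsNeg (ρ.σ (π D) (ρ.e b)) := by
      rw [hkey]
      exact isNeg_neg ρ (isPos_simple ρ a)
    have hDb : D ++ [b] = (L.take ((k':ℕ)+1)).drop ((k:ℕ)+1) := by
      rw [← List.take_concat_get k'.2, List.concat_eq_append,
        List.drop_append_of_le_length (by omega), hD, hb, List.get_eq_getElem]
    have hred1 : cs.IsReduced (D ++ [b]) := by
      rw [hDb]
      exact (hL.take _).drop _
    have hredD : cs.IsReduced D := (hL.take _).drop _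
    have hposD : ρ.IsPos (ρ.σ (π D) (ρ.e b)) := by
      apply isPos_of_length_succ
      rw [CoxeterSystem.IsReduced] at hred1 hredD
      have hpd : π (D ++ [b]) = π D * s b := by
        rw [cs.wordProd_append, cs.wordProd_singleton]
      rw [← hpd, hred1, hredD, List.length_append, List.length_singleton]
    have hroot : ρ.IsRoot (ρ.σ (π D) (ρ.e b)) := isRoot_sigma ρ _ (isRoot_simple ρ b)
    exact root_ne_zero ρ hroot (eq_zero_of_pos_of_neg ρ hposD hnegD)
  intro k k' heq
  by_contra hne
  rcases lt_trichotomy (k:ℕ) (k':ℕ) with hlt | h | hgt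
  · exact core k k' hlt heq
  · exact hne (Fin.ext h)
  · exact core k' k hgt heq.symm

lemma invSet_eq_range {L : List B} (hL : cs.IsReduced L) :
    ρ.invSet (π L)⁻¹ = Set.range (invRootsF ρ L) := by
  ext α
  constructor
  · rintro ⟨hpos, hneg⟩
    have hα0 : α ≠ 0 := root_ne_zero ρ hpos.1
    set S : Set ℕ := {k | k ≤ L.length ∧ ρ.IsNeg (ρ.σ (π (L.take k))⁻¹ α)} with hS
    have hSne : L.length ∈ S := by
      refine ⟨le_refl _, ?_⟩
      rw [List.take_length]
      exact hneg
    obtain ⟨hle, hnegk⟩ : sInf S ∈ S := Nat.sInf_mem ⟨_, hSne⟩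
    have h0 : sInf S ≠ 0 := by
      intro h0
      rw [h0] at hnegk
      simp only [List.take_zero, cs.wordProd_nil, inv_one, sigma_one_apply] at hnegk
      exact (not_isNeg_of_isPos ρ hα0 hpos) hnegk
    obtain ⟨k, hk⟩ : ∃ k, sInf S = k + 1 := ⟨sInf S - 1, by omega⟩
    have hklt : k < L.length := by omega
    have hknotneg : ¬ ρ.IsNeg (ρ.σ (π (L.take k))⁻¹ α) := by
      intro hn
      exact Nat.notMem_of_lt_sInf (by omega : k < sInf S) ⟨by omega, hn⟩
    have hroot : ρ.IsRoot (ρ.σ (π (L.take k))⁻¹ α) := isRoot_sigma ρ _ hpos.1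
    have hposk : ρ.IsPos (ρ.σ (π (L.take k))⁻¹ α) :=
      (isPos_or_isNeg_of_isRoot ρ hroot).resolve_right hknotneg
    have hnegk1 : ρ.IsNeg (ρ.σ (π (L.take (k+1)))⁻¹ α) := by
      rw [← hk]
      exact hnegk
    have hsucc := wordProd_take_succ (cs := cs) L ⟨k, hklt⟩
    simp only [Fin.val_mk] at hsucc
    rw [hsucc, mul_inv_rev, cs.inv_simple, sigma_mul_apply] at hnegk1
    have heq := eq_simple_of_pos_of_simple_neg ρ hposk hnegk1
    refine ⟨⟨k, hklt⟩, ?_⟩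
    rw [invRootsF]
    show ρ.σ (π (L.take k)) (ρ.e (L.get ⟨k, hklt⟩)) = α
    rw [← heq, sigma_cancel_inv]
  · rintro ⟨k, rfl⟩
    exact invRootsF_mem_invSet ρ hL k

lemma invRootsF_prefix (L L' : List B) (k : Fin L.length) :
    invRootsF ρ (L ++ L') ⟨(k:ℕ), by rw [List.length_append]; omega⟩ = invRootsF ρ L k := by
  have h1 : (L ++ L').take (k:ℕ) = L.take (k:ℕ) :=
    List.take_append_of_le_length (le_of_lt k.2)
  have h2 : (L ++ L').get ⟨(k:ℕ), by rw [List.length_append]; omega⟩ = L.get k := by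
    rw [List.get_eq_getElem, List.get_eq_getElem]
    exact List.getElem_append_left k.2
  rw [invRootsF, invRootsF]
  show ρ.σ (π ((L ++ L').take (k:ℕ))) (ρ.e ((L ++ L').get _)) = _
  rw [h1, h2]

lemma range_invRootsF_prefix (L L' : List B) :
    Set.range (invRootsF ρ L) ⊆ Set.range (invRootsF ρ (L ++ L')) := by
  rintro _ ⟨k, rfl⟩
  exact ⟨⟨(k:ℕ), by rw [List.length_append]; omega⟩, invRootsF_prefix ρ L L' k⟩

end CoxPaperAux

namespace CoxPaperAux

open CoxPaper CoxPaper.GeomRep CoxeterSystem Real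

variable {B : Type*} {W : Type*} [Group W] {M : CoxeterMatrix B}
variable {cs : CoxeterSystem M W}

lemma wordProd_join_replicate (k : ℕ) (L : List B) :
    cs.wordProd (List.flatten (List.replicate k L)) = (cs.wordProd L) ^ k := by
  induction k with
  | zero => simp
  | succ k ih => rw [List.replicate_succ, List.flatten_cons, cs.wordProd_append, ih, pow_succ']

lemma length_join_replicate (k : ℕ) (L : List B) :
    (List.flatten (List.replicate k L)).length = k * L.length := by
  induction k with
  | zero => simp
  | succ k ih =>
      rw [List.replicate_succ, List.flatten_cons, List.length_append, ih]
      ring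

end CoxPaperAux
open CoxPaper in
/-- For a straight standard Coxeter element `c` of an irreducible infinite Coxeter system
of rank `n`, the inversion set `Φ⁺(c⁻¹)` has exactly `n` elements, and distinct elements
of `Φ⁺(c⁻¹)` lie in distinct `⟨c⟩`-orbits. -/
theorem stmt_17 {B W : Type*} [Fintype B] [Group W] {M : CoxeterMatrix B}
    (cs : CoxeterSystem M W) (hirr : IsIrreducible M) (hinf : Infinite W)
    {V : Type*} [AddCommGroup V] [Module ℝ V] (ρ : GeomRep cs V)
    {c : W} (hc : IsStdCoxeterElement cs c) (hstraight : IsStraight cs c) :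
    (ρ.invSet c⁻¹).ncard = Fintype.card B ∧
    ∀ β ∈ ρ.invSet c⁻¹, ∀ γ ∈ ρ.invSet c⁻¹, β ≠ γ → ∀ k : ℤ, ρ.σ (c ^ k) β ≠ γ := by
  classical
  open CoxPaperAux CoxPaper.GeomRep in
  obtain ⟨l, hnodup, hall, hcform⟩ := hc
  set n := Fintype.card B with hn
  have hltf : l.toFinset = Finset.univ :=
    Finset.eq_univ_iff_forall.mpr (fun i => List.mem_toFinset.mpr (hall i))
  have hlen : l.length = n := by
    rw [← List.toFinset_card_of_nodup hnodup, hltf, hn, Finset.card_univ]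
  have hred : cs.IsReduced l := isReduced_of_nodup ρ hnodup
  have hlc : cs.length c = n := by
    rw [hcform]
    rw [CoxeterSystem.IsReduced] at hred
    rw [hred, hlen]
  have hpow : ∀ k : ℕ, cs.length (c ^ k) = k * n := by
    intro k
    have h := hstraight (k : ℤ)
    rwa [zpow_natCast, Int.natAbs_natCast, hlc] at h
  have hpowneg : ∀ k : ℕ, cs.length ((c⁻¹) ^ k) = k * n := by
    intro k
    have h := hstraight (-(k : ℤ))
    rwa [zpow_neg, zpow_natCast, ← inv_pow, Int.natAbs_neg, Int.natAbs_natCast, hlc] at h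
  have hredl : cs.IsReduced l := isReduced_of_nodup ρ hnodup
  have hredpow : ∀ k : ℕ, cs.IsReduced (List.flatten (List.replicate k l)) := by
    intro k
    rw [CoxeterSystem.IsReduced, wordProd_join_replicate, ← hcform, hpow k,
      length_join_replicate, hlen]
  have hrevred : cs.IsReduced l.reverse := (cs.isReduced_reverse_iff l).mpr hredl
  have hcinv : c⁻¹ = cs.wordProd l.reverse := by rw [cs.wordProd_reverse, hcform]
  have hredpowinv : ∀ k : ℕ, cs.IsReduced (List.flatten (List.replicate k l.reverse)) := by
    intro k
    rw [CoxeterSystem.IsReduced, wordProd_join_replicate, ← hcinv, hpowneg k,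
      length_join_replicate, List.length_reverse, hlen]
  have hinv_c : ρ.invSet c⁻¹ = Set.range (invRootsF ρ l) := by
    rw [hcform]
    exact invSet_eq_range ρ hredl
  have hcard : (ρ.invSet c⁻¹).ncard = n := by
    rw [hinv_c, ← Set.image_univ, Set.ncard_image_of_injective _ (invRootsF_injective ρ hredl),
      Set.ncard_univ, Nat.card_eq_fintype_card, Fintype.card_fin, hlen]
  refine ⟨hcard, ?_⟩
  intro β hβ γ hγ hne k hk
  obtain ⟨hβpos, hβneg⟩ := hβ
  obtain ⟨hγpos, hγneg⟩ := hγ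
  have hSubA : ∀ t : ℕ, 1 ≤ t → ∀ δ, δ ∈ ρ.invSet c⁻¹ → ρ.IsNeg (ρ.σ ((c ^ t)⁻¹) δ) := by
    intro t ht δ hδ
    obtain ⟨t', rfl⟩ : ∃ t', t = t' + 1 := ⟨t - 1, by omega⟩
    have hsplit : List.flatten (List.replicate (t'+1) l) = l ++ List.flatten (List.replicate t' l) := by
      rw [List.replicate_succ, List.flatten_cons]
    have hmem : δ ∈ ρ.invSet (cs.wordProd (List.flatten (List.replicate (t'+1) l)))⁻¹ := by
      rw [invSet_eq_range ρ (hredpow (t'+1)), hsplit]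
      apply range_invRootsF_prefix
      rw [hinv_c] at hδ
      exact hδ
    rw [wordProd_join_replicate, ← hcform] at hmem
    exact hmem.2
  have hSubB : ∀ m : ℕ, ∀ δ, δ ∈ ρ.invSet c⁻¹ → ρ.IsPos (ρ.σ (c ^ m) δ) := by
    intro m δ hδ
    obtain ⟨hδpos, hδneg⟩ := hδ
    rcases Nat.eq_zero_or_pos m with rfl | hm
    · simpa using hδpos
    by_contra hnp
    have hroot : ρ.IsRoot (ρ.σ (c ^ m) δ) := isRoot_sigma ρ _ hδpos.1
    have hnegm : ρ.IsNeg (ρ.σ (c ^ m) δ) := (isPos_or_isNeg_of_isRoot ρ hroot).resolve_left hnp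
    set α := - ρ.σ c⁻¹ δ with hα
    have hαpos : ρ.IsPos α := isPos_neg ρ hδneg
    have hca : ρ.σ c α = - δ := by
      rw [hα, map_neg, sigma_cancel_inv]
    have hanegc : ρ.IsNeg (ρ.σ c α) := by
      rw [hca]
      exact isNeg_neg ρ hδpos
    have hsplit : List.flatten (List.replicate (m+1) l.reverse) =
        l.reverse ++ List.flatten (List.replicate m l.reverse) := by
      rw [List.replicate_succ, List.flatten_cons]
    have hmemc' : α ∈ ρ.invSet (cs.wordProd (List.flatten (List.replicate (m+1) l.reverse)))⁻¹ := by
      rw [invSet_eq_range ρ (hredpowinv (m+1)), hsplit]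
      apply range_invRootsF_prefix
      rw [← invSet_eq_range ρ hrevred]
      show α ∈ ρ.invSet (cs.wordProd l.reverse)⁻¹
      rw [← hcinv, inv_inv]
      exact ⟨hαpos, hanegc⟩
    have hmneg : ρ.IsNeg (ρ.σ ((cs.wordProd (List.flatten (List.replicate (m+1) l.reverse)))⁻¹) α) :=
      hmemc'.2
    rw [wordProd_join_replicate, ← hcinv, inv_pow, inv_inv] at hmneg
    have hcm1 : ρ.σ (c ^ (m+1)) α = - ρ.σ (c ^ m) δ := by
      rw [pow_succ, sigma_mul_apply, hca, map_neg]
    rw [hcm1] at hmneg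
    have hposneg : ρ.IsPos (- ρ.σ (c ^ m) δ) := isPos_neg ρ hnegm
    have h0 := eq_zero_of_pos_of_neg ρ hposneg hmneg
    have hz : ρ.σ (c ^ m) δ = 0 := by
      rw [← neg_neg (ρ.σ (c ^ m) δ), h0, neg_zero]
    exact root_ne_zero ρ hroot hz
  rcases lt_trichotomy k 0 with hneg | rfl | hposk
  · have hk1 : 1 ≤ k.natAbs := by omega
    have hzc : c ^ k = (c ^ k.natAbs)⁻¹ := by
      rw [← zpow_natCast, ← zpow_neg]
      congr 1
      omega
    have hγisneg : ρ.IsNeg γ := by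
      rw [← hk, hzc]
      exact hSubA k.natAbs hk1 β ⟨hβpos, hβneg⟩
    exact root_ne_zero ρ hγpos.1 (eq_zero_of_pos_of_neg ρ hγpos hγisneg)
  · rw [zpow_zero, sigma_one_apply] at hk
    exact hne hk
  · have hknat : c ^ k = c ^ k.toNat := by
      rw [← zpow_natCast]
      congr 1
      omega
    obtain ⟨t', ht'⟩ : ∃ t', k.toNat = t' + 1 := ⟨k.toNat - 1, by omega⟩
    have hγc : ρ.σ c⁻¹ γ = ρ.σ (c ^ t') β := by
      rw [← hk, hknat, ht', pow_succ', sigma_mul_apply, sigma_inv_cancel]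
    have hγcpos : ρ.IsPos (ρ.σ c⁻¹ γ) := by
      rw [hγc]
      exact hSubB t' β ⟨hβpos, hβneg⟩
    have h0 := eq_zero_of_pos_of_neg ρ hγcpos hγneg
    have hγ0 : γ = 0 := by
      have h1 := congrArg (ρ.σ c) h0
      rwa [sigma_cancel_inv, map_zero] at h1
    exact root_ne_zero ρ hγpos.1 hγ0
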